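/- (Critical ODE blow-up lemma) Let p > 1, K > 0 and c > 0. Then there exist ε₀ > 0 and C > 0 such that for every 0 < ε ≤ ε₀ the following holds: if T > 0 and H : [0,T) → ℝ is differentiable with H(0) ≥ c ε and H'(t) ≥ K (1+t)^{−1} H(t)^p for all t ∈ [0,T), then T ≤ exp(C ε^{−(p−1)}). -/

import Mathlib

open Real Set

/-- Critical ODE blow-up lemma: if `H' ≥ K (1+t)^{-1} H^p` on `[0,T)` with `p > 1`
and `H(0) ≥ c ε`, then `T ≤ exp(C ε^{-(p-1)})`. -/
theorem ode_blowup_critical {p K c : ℝ} (hp : 1 < p) (hK : 0 < K) (hc : 0 < c) :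
    ∃ ε₀ > (0 : ℝ), ∃ C > (0 : ℝ), ∀ ε : ℝ, 0 < ε → ε ≤ ε₀ →
      ∀ (T : ℝ) (H H' : ℝ → ℝ), 0 < T →
        (∀ t ∈ Set.Ico (0 : ℝ) T, HasDerivWithinAt H (H' t) (Set.Ico (0 : ℝ) T) t) →
        c * ε ≤ H 0 →
        (∀ t ∈ Set.Ico (0 : ℝ) T, K * (1 + t)⁻¹ * H t ^ p ≤ H' t) →
        T ≤ Real.exp (C * ε ^ (-(p - 1))) := by
  have hp1 : (0:ℝ) < p - 1 := by linarith
  refine ⟨1, one_pos, c ^ (1 - p) / ((p - 1) * K),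
    div_pos (Real.rpow_pos_of_pos hc _) (mul_pos hp1 hK), ?_⟩
  intro ε hε hε1 T H H' hT hdiff hH0 hode
  have hcε : 0 < c * ε := mul_pos hc hε
  have hHc : ContinuousOn H (Ico 0 T) := fun t ht => (hdiff t ht).continuousWithinAt
  -- derivative at interior points
  have hder : ∀ x ∈ Ioo (0:ℝ) T, HasDerivAt H (H' x) x := by
    intro x hx
    exact (hdiff x ⟨hx.1.le, hx.2⟩).hasDerivAt (Ico_mem_nhds hx.1 hx.2)
  -- positivity of H
  have hpos : ∀ t ∈ Ico (0:ℝ) T, c * ε / 2 < H t := by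
    by_contra hbad
    push_neg at hbad
    obtain ⟨t₁, ht₁, hHt₁⟩ := hbad
    set S : Set ℝ := Icc (0:ℝ) t₁ ∩ H ⁻¹' (Iic (c * ε / 2)) with hS
    have hSne : S.Nonempty := ⟨t₁, ⟨ht₁.1, le_refl _⟩, hHt₁⟩
    have hSbd : BddBelow S := ⟨0, fun x hx => hx.1.1⟩
    have hsub : Icc (0:ℝ) t₁ ⊆ Ico 0 T := fun x hx => ⟨hx.1, lt_of_le_of_lt hx.2 ht₁.2⟩
    have hScl : IsClosed S :=
      (hHc.mono hsub).preimage_isClosed_of_isClosed isClosed_Icc isClosed_Iic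
    have ht₀S : sInf S ∈ S := hScl.csInf_mem hSne hSbd
    set t₀ := sInf S
    have ht₀le : H t₀ ≤ c * ε / 2 := ht₀S.2
    have ht₀0 : 0 < t₀ := by
      rcases ht₀S.1.1.lt_or_eq with h | h
      · exact h
      · exfalso; rw [← h] at ht₀le; linarith
    have hup : ∀ x ∈ Ico (0:ℝ) t₀, c * ε / 2 < H x := by
      intro x hx
      by_contra h
      push_neg at h
      have hxS : x ∈ S := ⟨⟨hx.1, hx.2.le.trans ht₀S.1.2⟩, h⟩
      exact absurd (csInf_le hSbd hxS) (not_le.2 hx.2)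
    have hsm : StrictMonoOn H (Icc 0 t₀) := by
      apply strictMonoOn_of_deriv_pos (convex_Icc _ _)
        (hHc.mono (fun x hx => hsub ⟨hx.1, hx.2.trans ht₀S.1.2⟩))
      intro x hx
      rw [interior_Icc] at hx
      have hxI : x ∈ Ioo (0:ℝ) T := ⟨hx.1, lt_of_lt_of_le hx.2 (ht₀S.1.2.trans ht₁.2.le)⟩
      rw [(hder x hxI).deriv]
      have hHx : 0 < H x := lt_trans (by positivity) (hup x ⟨hx.1.le, hx.2⟩)
      have h1x : (0:ℝ) < 1 + x := by linarith [hx.1]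
      have := hode x ⟨hxI.1.le, hxI.2⟩
      have : 0 < K * (1 + x)⁻¹ * H x ^ p := by positivity
      linarith [hode x ⟨hxI.1.le, hxI.2⟩]
    have : H 0 < H t₀ := hsm ⟨le_refl _, ht₀0.le⟩ ⟨ht₀0.le, le_refl _⟩ ht₀0
    linarith
  -- the Lyapunov function
  set G : ℝ → ℝ := fun t => H t ^ (1 - p) + (p - 1) * K * Real.log (1 + t) with hGdef
  have hGat : ∀ x ∈ Ioo (0:ℝ) T,
      HasDerivAt G (H' x * (1 - p) * H x ^ (1 - p - 1) + (p - 1) * K * (1 / (1 + x))) x := by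
    intro x hx
    have hHx : 0 < H x := lt_trans (by positivity) (hpos x ⟨hx.1.le, hx.2⟩)
    have h1x : (0:ℝ) < 1 + x := by linarith [hx.1]
    have h1 : HasDerivAt (fun t => H t ^ (1 - p)) (H' x * (1 - p) * H x ^ (1 - p - 1)) x :=
      (hder x hx).rpow_const (Or.inl hHx.ne')
    have h2 : HasDerivAt (fun t : ℝ => Real.log (1 + t)) (1 / (1 + x)) x := by
      have : HasDerivAt (fun t : ℝ => 1 + t) 1 x := (hasDerivAt_id x).const_add 1
      exact this.log h1x.ne'
    exact h1.add (h2.const_mul ((p - 1) * K))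
  have hGanti : AntitoneOn G (Ico 0 T) := by
    apply antitoneOn_of_deriv_nonpos (convex_Ico _ _)
    · apply ContinuousOn.add
      · exact hHc.rpow_const (fun x hx => Or.inl (lt_trans (by positivity) (hpos x hx)).ne')
      · apply continuousOn_const.mul
        apply ContinuousOn.log (continuousOn_const.add continuousOn_id)
        intro x hx
        have : (0:ℝ) ≤ x := hx.1
        show (1:ℝ) + x ≠ 0
        positivity
    · rw [interior_Ico]
      exact fun x hx => (hGat x hx).differentiableAt.differentiableWithinAt
    · rw [interior_Ico]
      intro x hx
      rw [(hGat x hx).deriv]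
      have hHx : 0 < H x := lt_trans (by positivity) (hpos x ⟨hx.1.le, hx.2⟩)
      have h1x : (0:ℝ) < 1 + x := by linarith [hx.1]
      have hD : 0 < H x ^ (1 - p - 1) := Real.rpow_pos_of_pos hHx _
      have key : H x ^ p * H x ^ (1 - p - 1) = (1 + x) * (1 + x)⁻¹ := by
        rw [← Real.rpow_add hHx, show p + (1 - p - 1) = 0 by ring, Real.rpow_zero,
          mul_inv_cancel₀ h1x.ne']
      have hstep := mul_le_mul_of_nonneg_right (hode x ⟨hx.1.le, hx.2⟩)
        (mul_nonneg hp1.le hD.le)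
      have h2 : K * (1 + x)⁻¹ * H x ^ p * ((p - 1) * H x ^ (1 - p - 1))
          = (p - 1) * K * ((1 + x)⁻¹ * ((1 + x) * (1 + x)⁻¹)) := by
        rw [← key]; ring
      rw [h2, mul_inv_cancel₀ h1x.ne', mul_one] at hstep
      have hinv : (1:ℝ) / (1 + x) = (1 + x)⁻¹ := one_div _
      rw [hinv]
      nlinarith [hstep]
  -- conclude
  set B := c ^ (1 - p) / ((p - 1) * K) * ε ^ (-(p - 1)) with hB
  have hkey : ∀ t ∈ Ico (0:ℝ) T, Real.log (1 + t) < B := by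
    intro t ht
    have hGle : G t ≤ G 0 := hGanti ⟨le_refl _, hT⟩ ht ht.1
    have hHt : 0 < H t := lt_trans (by positivity) (hpos t ht)
    have hHtp : 0 < H t ^ (1 - p) := Real.rpow_pos_of_pos hHt _
    have hH00 : 0 < H 0 := lt_of_lt_of_le hcε hH0
    have hG0 : G 0 = H 0 ^ (1 - p) := by
      simp [hGdef, Real.log_one]
    have hle : H 0 ^ (1 - p) ≤ (c * ε) ^ (1 - p) :=
      Real.rpow_le_rpow_of_nonpos hcε hH0 (by linarith)
    have hmul : (c * ε) ^ (1 - p) = c ^ (1 - p) * ε ^ (-(p - 1)) := by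
      rw [Real.mul_rpow hc.le hε.le, show (1 - p) = -(p - 1) by ring]
    have hlt : (p - 1) * K * Real.log (1 + t) < c ^ (1 - p) * ε ^ (-(p - 1)) := by
      rw [hG0] at hGle
      calc (p - 1) * K * Real.log (1 + t) < G t := by
            simp only [hGdef]; linarith
        _ ≤ H 0 ^ (1 - p) := hGle
        _ ≤ (c * ε) ^ (1 - p) := hle
        _ = c ^ (1 - p) * ε ^ (-(p - 1)) := hmul
    rw [hB, div_mul_eq_mul_div, lt_div_iff₀ (mul_pos hp1 hK)]
    linarith
  by_contra hcon
  push_neg at hcon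
  have hmem : Real.exp (c ^ (1 - p) / ((p - 1) * K) * ε ^ (-(p - 1))) ∈ Ico (0:ℝ) T :=
    ⟨(Real.exp_pos _).le, hcon⟩
  have h1 := hkey _ hmem
  have h2 : B < Real.log (1 + Real.exp B) := by
    have := Real.log_lt_log (Real.exp_pos B) (lt_one_add (Real.exp B))
    rwa [Real.log_exp] at this
  rw [hB] at h2
  linarith
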